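/- Any two directed graphs of cardinality continuum which are strictly saturated and contain no infinite directed path are isomorphic. -/

import Mathlib

/-- A directed graph (given by its arrow relation) is strictly saturated if every
out-neighborhood is countable, and every countable vertex set is the out-neighborhood
of as many vertices as there are vertices in the graph. -/
def StrictlySat {V : Type*} (G : V → V → Prop) : Prop :=
  (∀ v : V, {w | G v w}.Countable) ∧
  ∀ A : Set V, A.Countable →
    Cardinal.mk {g : V | {w | G g w} = A} = Cardinal.mk V

/-- No infinite directed path. -/
def NoInfPath {V : Type*} (G : V → V → Prop) : Prop :=
  ¬ ∃ f : ℕ → V, ∀ n, G (f n) (f (n + 1))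


open Cardinal Set

section Aux
variable {V W : Type} (G : V → V → Prop) (H : W → W → Prop)

/-- partial-isomorphism invariant -/
structure Good (R : Set (V × W)) : Prop where
  func : ∀ a b b', (a, b) ∈ R → (a, b') ∈ R → b = b'
  inj : ∀ a a' b, (a, b) ∈ R → (a', b) ∈ R → a = a'
  fwd : ∀ a b a', (a, b) ∈ R → G a a' → ∃ b', (a', b') ∈ R ∧ H b b'
  bwd : ∀ a b b', (a, b) ∈ R → H b b' → ∃ a', (a', b') ∈ R ∧ G a a'

def flipR (R : Set (V × W)) : Set (W × V) := {p | (p.2, p.1) ∈ R}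

lemma good_flip {R : Set (V × W)} (h : Good G H R) : Good H G (flipR R) := by
  constructor
  · exact fun a b b' hb hb' => h.inj b b' a hb hb'
  · exact fun a a' b hb hb' => h.func b a a' hb hb'
  · exact fun a b a' hab haa' => (h.bwd b a a' hab haa').imp fun b' ⟨h1, h2⟩ => ⟨h1, h2⟩
  · exact fun a b b' hab hbb' => (h.fwd b a b' hab hbb').imp fun a' ⟨h1, h2⟩ => ⟨h1, h2⟩

lemma flipR_flipR (R : Set (V × W)) : flipR (flipR R) = R := rfl

lemma mk_flipR (R : Set (V × W)) : #(flipR R) = #R := by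
  apply Cardinal.mk_congr
  exact ⟨fun p => ⟨(p.1.2, p.1.1), p.2⟩, fun p => ⟨(p.1.2, p.1.1), p.2⟩,
    fun p => by rfl, fun p => by rfl⟩

lemma good_iUnion {ι : Sort*} {F : ι → Set (V × W)}
    (hdir : ∀ i j, F i ⊆ F j ∨ F j ⊆ F i) (h : ∀ i, Good G H (F i)) :
    Good G H (⋃ i, F i) := by
  constructor
  · rintro a b b' hb hb'
    obtain ⟨i, hi⟩ := mem_iUnion.1 hb
    obtain ⟨j, hj⟩ := mem_iUnion.1 hb'
    rcases hdir i j with hij | hij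
    · exact (h j).func a b b' (hij hi) hj
    · exact (h i).func a b b' hi (hij hj)
  · rintro a a' b hb hb'
    obtain ⟨i, hi⟩ := mem_iUnion.1 hb
    obtain ⟨j, hj⟩ := mem_iUnion.1 hb'
    rcases hdir i j with hij | hij
    · exact (h j).inj a a' b (hij hi) hj
    · exact (h i).inj a a' b hi (hij hj)
  · rintro a b a' hb haa'
    obtain ⟨i, hi⟩ := mem_iUnion.1 hb
    obtain ⟨b', h1, h2⟩ := (h i).fwd a b a' hi haa'
    exact ⟨b', mem_iUnion.2 ⟨i, h1⟩, h2⟩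
  · rintro a b b' hb hbb'
    obtain ⟨i, hi⟩ := mem_iUnion.1 hb
    obtain ⟨a', h1, h2⟩ := (h i).bwd a b b' hi hbb'
    exact ⟨a', mem_iUnion.2 ⟨i, h1⟩, h2⟩

lemma noInfPath_wf (h : ¬ ∃ f : ℕ → V, ∀ n, G (f n) (f (n + 1))) :
    WellFounded (fun a b : V => G b a) := by
  constructor
  intro a
  by_contra ha
  have key : ∀ x : {x : V // ¬Acc (fun a b : V => G b a) x},
      ∃ y : {x : V // ¬Acc (fun a b : V => G b a) x}, G x.1 y.1 := by
    rintro ⟨x, hx⟩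
    by_contra hy
    push_neg at hy
    exact hx (Acc.intro x fun y hy' => by_contra fun hacc => hy ⟨y, hacc⟩ hy')
  choose nxt hnxt using key
  refine h ⟨fun n => (nxt^[n] ⟨a, ha⟩).1, fun n => ?_⟩
  show G (nxt^[n] ⟨a, ha⟩).1 (nxt^[n+1] ⟨a, ha⟩).1
  rw [Function.iterate_succ_apply' nxt n _]
  exact hnxt _

lemma tc_countable (hwf : WellFounded (fun a b : V => G b a))
    (hcnt : ∀ v, {w | G v w}.Countable) (v : V) :
    {b | Relation.TransGen G v b}.Countable := by
  induction v using WellFounded.induction hwf with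
  | _ v IH =>
  have hsub : {b | Relation.TransGen G v b} ⊆
      {w | G v w} ∪ ⋃ w ∈ {w | G v w}, {b | Relation.TransGen G w b} := by
    intro b hb
    rcases (Relation.TransGen.head'_iff).1 hb with ⟨c, hvc, hcb⟩
    rcases Relation.reflTransGen_iff_eq_or_transGen.1 hcb with rfl | htc
    · exact Or.inl hvc
    · exact Or.inr (mem_biUnion hvc htc)
  exact Countable.mono hsub ((hcnt v).union ((hcnt v).biUnion fun w hw => IH w hw))

end Aux
section Ext
variable {V W : Type}

lemma extend_lemma (G : V → V → Prop) (H : W → W → Prop)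
    (hVW : #V = #W) (hWinf : ℵ₀ < #W)
    (hGcnt : ∀ v, {w | G v w}.Countable)
    (hHsat : ∀ A : Set W, A.Countable → #{g : W | {w | H g w} = A} = #W)
    (hGwf : WellFounded (fun a b : V => G b a))
    (R : Set (V × W)) (hR : Good G H R) (hcard : #R < #W) (v : V) :
    ∃ R' : Set (V × W), R ⊆ R' ∧ Good G H R' ∧ (∃ b, (v, b) ∈ R') ∧
      #(↥(R' \ R)) ≤ Cardinal.aleph0 := by
  classical
  have hWne : Nonempty W := Cardinal.mk_ne_zero_iff.1 (Cardinal.aleph0_pos.trans hWinf).ne'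
  -- the range of R is small
  set Ran : Set W := {b | ∃ a, (a, b) ∈ R} with hRandef
  have hRan : #Ran < #W := by
    refine lt_of_le_of_lt ?_ hcard
    exact Cardinal.mk_le_of_surjective (f := fun p : ↥R => (⟨p.1.2, p.1.1, p.2⟩ : ↥Ran))
      (by rintro ⟨b, a, hab⟩; exact ⟨⟨(a, b), hab⟩, rfl⟩)
  -- fresh-value pools
  have hpool : ∀ A : Set W, A.Countable →
      #V ≤ #({g : W | {w | H g w} = A} \ Ran : Set W) := by
    intro A hA
    rw [hVW]
    by_contra hlt
    push_neg at hlt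
    have h1 : #W ≤ #({g : W | {w | H g w} = A} \ Ran : Set W) + #Ran := by
      rw [← hHsat A hA]
      refine le_trans (Cardinal.mk_le_mk_of_subset ?_) (Cardinal.mk_union_le _ _)
      intro g hg
      by_cases hgr : g ∈ Ran
      · exact Or.inr hgr
      · exact Or.inl ⟨hg, hgr⟩
    exact absurd h1 (not_le.2 (Cardinal.add_lt_of_lt hWinf.le hlt hRan))
  have hemb : ∀ A : Set W, ∃ f : V → W, A.Countable →
      (∀ a, {w | H (f a) w} = A ∧ f a ∉ Ran) ∧ Function.Injective f := by
    intro A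
    by_cases hA : A.Countable
    · obtain ⟨e⟩ : Nonempty (V ↪ ↥({g : W | {w | H g w} = A} \ Ran : Set W)) :=
        Cardinal.le_def _ _ |>.1 (hpool A hA)
      exact ⟨fun a => (e a).1, fun _ =>
        ⟨fun a => ⟨(e a).2.1, (e a).2.2⟩,
         fun a a' h => e.injective (Subtype.ext h)⟩⟩
    · exact ⟨fun _ => Classical.arbitrary W, fun h => absurd h hA⟩
  choose φ hφ using hemb
  -- the extension map, by well-founded recursion
  let F : V → W := hGwf.fix (fun a IH =>
    if h : ∃ b, (a, b) ∈ R then h.choose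
    else φ {w | ∃ b, ∃ hb : G a b, w = IH b hb} a)
  have hFeq : ∀ a, F a = if h : ∃ b, (a, b) ∈ R then h.choose
      else φ (F '' {b | G a b}) a := by
    intro a
    show hGwf.fix _ a = _
    rw [WellFounded.fix_eq]
    congr 1
    ext h
    congr 1
    ext w
    constructor
    · rintro ⟨b, hb, rfl⟩; exact ⟨b, hb, rfl⟩
    · rintro ⟨b, hb, rfl⟩; exact ⟨b, hb, rfl⟩
  have hF1 : ∀ a b, (a, b) ∈ R → F a = b := by
    intro a b hab
    have h : ∃ b, (a, b) ∈ R := ⟨b, hab⟩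
    rw [hFeq a, dif_pos h]
    exact hR.func a _ b h.choose_spec hab
  have hFmem : ∀ a, (∃ b, (a, b) ∈ R) → (a, F a) ∈ R := by
    intro a h
    rw [hFeq a, dif_pos h]
    exact h.choose_spec
  have hF2 : ∀ a, ¬(∃ b, (a, b) ∈ R) → F a = φ (F '' {b | G a b}) a := by
    intro a h
    rw [hFeq a, dif_neg h]
  have hAcnt : ∀ a : V, (F '' {b | G a b}).Countable := fun a => (hGcnt a).image F
  have hFA : ∀ a, ¬(∃ b, (a, b) ∈ R) →
      {w | H (F a) w} = F '' {b | G a b} ∧ F a ∉ Ran := by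
    intro a h
    rw [hF2 a h]
    exact ((hφ _ (hAcnt a)).1 a)
  -- the set of new vertices
  set T : Set V := insert v {b | Relation.TransGen G v b} with hTdef
  have hTcnt : T.Countable := (tc_countable G hGwf hGcnt v).insert v
  have hTcl : ∀ a ∈ T, ∀ b, G a b → b ∈ T := by
    rintro a (rfl | ha) b hab
    · exact Or.inr (Relation.TransGen.single hab)
    · exact Or.inr (Relation.TransGen.tail ha hab)
  refine ⟨R ∪ (fun a => (a, F a)) '' T, subset_union_left, ?_, ?_, ?_⟩
  · have hval : ∀ a b, (a, b) ∈ R ∪ (fun a => (a, F a)) '' T → b = F a := by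
      rintro a b (hb | ⟨a1, ha1, heq⟩)
      · exact (hF1 a b hb).symm
      · obtain ⟨h1, h2⟩ := Prod.mk.injEq .. ▸ heq
        exact h1 ▸ h2.symm
    have hnewT : ∀ a b, (a, b) ∈ R ∪ (fun a => (a, F a)) '' T →
        ¬(∃ c, (a, c) ∈ R) → a ∈ T := by
      rintro a b (hb | ⟨a1, ha1, heq⟩) ha
      · exact absurd ⟨b, hb⟩ ha
      · obtain ⟨h1, h2⟩ := Prod.mk.injEq .. ▸ heq
        exact h1 ▸ ha1
    constructor
    · intro a b b' hb hb'
      rw [hval a b hb, hval a b' hb']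
    · intro a a' b hb hb'
      have hfa := hval a b hb
      have hfa' := hval a' b hb'
      by_cases ha : ∃ c, (a, c) ∈ R <;> by_cases ha' : ∃ c, (a', c) ∈ R
      · exact hR.inj a a' b (hfa ▸ hF1 a _ (hFmem a ha) ▸ hFmem a ha)
          (hfa' ▸ hF1 a' _ (hFmem a' ha') ▸ hFmem a' ha')
      · exact absurd ⟨a, hfa ▸ hFmem a ha⟩ (hfa' ▸ (hFA a' ha').2)
      · exact absurd ⟨a', hfa' ▸ hFmem a' ha'⟩ (hfa ▸ (hFA a ha).2)
      · have heq : F a = F a' := hfa ▸ hfa' ▸ rfl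
        have hA : F '' {b | G a b} = F '' {b | G a' b} := by
          rw [← (hFA a ha).1, ← (hFA a' ha').1, heq]
        have h1 : φ (F '' {b | G a b}) a = φ (F '' {b | G a b}) a' := by
          conv_rhs => rw [hA]
          rw [← hF2 a ha, ← hF2 a' ha', heq]
        exact (hφ _ (hAcnt a)).2 h1
    · intro a b a' hb haa'
      by_cases ha : ∃ c, (a, c) ∈ R
      · have hbR : (a, b) ∈ R := hval a b hb ▸ hF1 a _ (hFmem a ha) ▸ hFmem a ha
        obtain ⟨b', h1, h2⟩ := hR.fwd a b a' hbR haa'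
        exact ⟨b', Or.inl h1, h2⟩
      · have haT : a ∈ T := hnewT a b hb ha
        refine ⟨F a', Or.inr ⟨a', hTcl a haT a' haa', rfl⟩, ?_⟩
        rw [hval a b hb]
        have : F a' ∈ {w | H (F a) w} := (hFA a ha).1 ▸ ⟨a', haa', rfl⟩
        exact this
    · intro a b b' hb hbb'
      by_cases ha : ∃ c, (a, c) ∈ R
      · have hbR : (a, b) ∈ R := hval a b hb ▸ hF1 a _ (hFmem a ha) ▸ hFmem a ha
        obtain ⟨a', h1, h2⟩ := hR.bwd a b b' hbR hbb'
        exact ⟨a', Or.inl h1, h2⟩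
      · have haT : a ∈ T := hnewT a b hb ha
        have : b' ∈ F '' {b | G a b} := by
          rw [← (hFA a ha).1]
          exact hval a b hb ▸ hbb'
        obtain ⟨a', ha', rfl⟩ := this
        exact ⟨a', Or.inr ⟨a', hTcl a haT a' ha', rfl⟩, ha'⟩
  · exact ⟨F v, Or.inr ⟨v, Or.inl rfl, rfl⟩⟩
  · refine le_trans (Cardinal.mk_le_mk_of_subset (fun p hp => hp.1.resolve_left hp.2)) ?_
    have : ((fun a => (a, F a)) '' T).Countable := hTcnt.image _
    exact this.le_aleph0
end Ext
theorem stmt15 (V W : Type) (G : V → V → Prop) (H : W → W → Prop)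
    (hVc : Cardinal.mk V = Cardinal.continuum)
    (hWc : Cardinal.mk W = Cardinal.continuum)
    (hG : StrictlySat G) (hH : StrictlySat H)
    (hGp : NoInfPath G) (hHp : NoInfPath H) :
    ∃ e : V ≃ W, ∀ a b : V, G a b ↔ H (e a) (e b) := by
  classical
  obtain ⟨hGcnt, hGsat⟩ := hG
  obtain ⟨hHcnt, hHsat⟩ := hH
  have hGwf := noInfPath_wf G hGp
  have hHwf := noInfPath_wf H hHp
  have hVW : #V = #W := hVc.trans hWc.symm
  have hWV : #W = #V := hVW.symm
  have hWinf : ℵ₀ < #W := hWc ▸ Cardinal.aleph0_lt_continuum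
  have hVinf : ℵ₀ < #V := hVc ▸ Cardinal.aleph0_lt_continuum
  have hGsat' : ∀ A : Set V, A.Countable → #{g : V | {w | G g w} = A} = #V := by
    intro A hA; exact hGsat A hA
  have hHsat' : ∀ A : Set W, A.Countable → #{g : W | {w | H g w} = A} = #W := by
    intro A hA; exact hHsat A hA
  -- a well-order on V ⊕ W of minimal type
  obtain ⟨rS, wo, htype⟩ := Cardinal.ord_eq (V ⊕ W)
  haveI : IsWellOrder (V ⊕ W) rS := wo
  have hwfS : WellFounded rS := wo.toIsWellFounded.wf
  have hSmk : #(V ⊕ W) = #W := by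
    rw [Cardinal.mk_sum, Cardinal.lift_id, Cardinal.lift_id, hVc, hWc,
      Cardinal.add_eq_self Cardinal.aleph0_le_continuum]
  have hseg : ∀ x : V ⊕ W, #{y // rS y x} < #W := by
    intro x
    rw [← Ordinal.card_typein, ← hSmk]
    exact Cardinal.card_typein_lt (r := rS) x htype
  -- one step of the construction
  have step : ∀ (R : Set (V × W)) (x : V ⊕ W),
      ∃ R', R ⊆ R' ∧ #(↥(R' \ R)) ≤ ℵ₀ ∧
        (Good G H R → #R < #W → Good G H R' ∧
          (∀ v, x = Sum.inl v → ∃ b, (v, b) ∈ R') ∧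
          (∀ w, x = Sum.inr w → ∃ a, (a, w) ∈ R')) := by
    intro R x
    by_cases h : Good G H R ∧ #R < #W
    · obtain ⟨hR, hcard⟩ := h
      cases x with
      | inl v =>
        obtain ⟨R', h1, h2, h3, h4⟩ :=
          extend_lemma G H hVW hWinf hGcnt hHsat' hGwf R hR hcard v
        refine ⟨R', h1, h4, fun _ _ => ⟨h2, ?_, ?_⟩⟩
        · rintro v' ⟨rfl⟩; exact h3
        · rintro w' ⟨⟩
      | inr w =>
        have hflipcard : #(flipR R) < #V := by rw [mk_flipR]; exact hWV ▸ hcard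
        obtain ⟨S', h1, h2, h3, h4⟩ :=
          extend_lemma H G hWV hVinf hHcnt hGsat' hHwf (flipR R) (good_flip G H hR)
            hflipcard w
        have hdiff : (flipR S' \ R : Set (V × W)) = flipR (S' \ flipR R) := rfl
        refine ⟨flipR S', fun p hp => h1 hp, ?_, fun _ _ => ⟨good_flip H G h2, ?_, ?_⟩⟩
        · rw [hdiff, mk_flipR]; exact h4
        · rintro v' ⟨⟩
        · rintro w' ⟨rfl⟩
          obtain ⟨b, hb⟩ := h3
          exact ⟨b, hb⟩
    · exact ⟨R, subset_rfl, by simp, fun h1 h2 => absurd ⟨h1, h2⟩ h⟩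
  choose ext hext1 hext2 hext3 using step
  -- transfinite recursion along rS
  let F : V ⊕ W → Set (V × W) :=
    hwfS.fix (fun x IH => ext (⋃ y : {y // rS y x}, IH y.1 y.2) x)
  have hFeq : ∀ x, F x = ext (⋃ y : {y // rS y x}, F y.1) x := by
    intro x
    show hwfS.fix _ x = _
    rw [WellFounded.fix_eq]
  have hFmono : ∀ x y, rS y x → F y ⊆ F x := by
    intro x y h
    rw [hFeq x]
    exact subset_trans (subset_iUnion (fun y : {y // rS y x} => F y.1) ⟨y, h⟩)
      (hext1 _ x)
  -- main invariant
  have main : ∀ x : V ⊕ W, Good G H (F x) ∧ #(F x) ≤ ℵ₀ + #{y // rS y x} ∧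
      (∀ v, x = Sum.inl v → ∃ b, (v, b) ∈ F x) ∧
      (∀ w, x = Sum.inr w → ∃ a, (a, w) ∈ F x) := by
    intro x
    induction x using WellFounded.induction hwfS with
    | _ x IH =>
    set κ := ℵ₀ + #{y // rS y x} with hκ
    have hκinf : ℵ₀ ≤ κ := self_le_add_right _ _
    have hκW : κ < #W := Cardinal.add_lt_of_lt hWinf.le hWinf (hseg x)
    set U := ⋃ y : {y // rS y x}, F y.1 with hU
    have hUgood : Good G H U := by
      apply good_iUnion
      · intro i j
        rcases trichotomous_of rS i.1 j.1 with h | h | h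
        · exact Or.inl (hFmono j.1 i.1 h)
        · exact Or.inl (h ▸ subset_rfl)
        · exact Or.inr (hFmono i.1 j.1 h)
      · exact fun i => (IH i.1 i.2).1
    have hUcard : #U ≤ κ := by
      refine le_trans (Cardinal.mk_iUnion_le _) ?_
      have h1 : ⨆ y : {y // rS y x}, #(F y.1) ≤ κ := by
        apply ciSup_le'
        intro i
        refine le_trans (IH i.1 i.2).2.1 ?_
        refine add_le_add le_rfl ?_
        refine Cardinal.mk_le_of_injective (f := fun z : {z // rS z i.1} =>
          (⟨z.1, _root_.trans z.2 i.2⟩ : {z // rS z x})) ?_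
        intro z z' hzz
        exact Subtype.ext (Subtype.mk_eq_mk.1 hzz)
      have h0 : #{y // rS y x} ≤ κ := le_add_self
      refine le_trans (mul_le_mul' h0 h1) ?_
      exact (Cardinal.mul_eq_self hκinf).le
    have hUW : #U < #W := lt_of_le_of_lt hUcard hκW
    have hFx : F x = ext U x := hFeq x
    obtain ⟨hgood, hdr1, hdr2⟩ := hext3 U x hUgood hUW
    refine ⟨hFx ▸ hgood, ?_, hFx ▸ hdr1, hFx ▸ hdr2⟩
    · have hsub : F x ⊆ U ∪ (F x \ U) := fun p hp => by
        by_cases hpu : p ∈ U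
        · exact Or.inl hpu
        · exact Or.inr ⟨hp, hpu⟩
      refine le_trans (Cardinal.mk_le_mk_of_subset hsub) ?_
      refine le_trans (Cardinal.mk_union_le _ _) ?_
      have h2 : #(F x \ U : Set (V × W)) ≤ ℵ₀ := by
        rw [hFx]; exact hext2 U x
      calc #U + #(F x \ U : Set (V × W)) ≤ κ + ℵ₀ := add_le_add hUcard h2
        _ = κ := Cardinal.add_eq_left hκinf hκinf
  -- assemble the isomorphism
  have hdirAll : ∀ i j : V ⊕ W, F i ⊆ F j ∨ F j ⊆ F i := by
    intro i j
    rcases trichotomous_of rS i j with h | h | h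
    · exact Or.inl (hFmono j i h)
    · exact Or.inl (h ▸ subset_rfl)
    · exact Or.inr (hFmono i j h)
  have hGoodInf : Good G H (⋃ x : V ⊕ W, F x) := good_iUnion G H hdirAll fun i => (main i).1
  have htot : ∀ v : V, ∃ b, (v, b) ∈ ⋃ x : V ⊕ W, F x := by
    intro v
    obtain ⟨b, hb⟩ := (main (Sum.inl v)).2.2.1 v rfl
    exact ⟨b, mem_iUnion.2 ⟨Sum.inl v, hb⟩⟩
  have hsur : ∀ w : W, ∃ a, (a, w) ∈ ⋃ x : V ⊕ W, F x := by
    intro w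
    obtain ⟨a, ha⟩ := (main (Sum.inr w)).2.2.2 w rfl
    exact ⟨a, mem_iUnion.2 ⟨Sum.inr w, ha⟩⟩
  choose f hf using htot
  have hinj : Function.Injective f := fun a a' h =>
    hGoodInf.inj a a' (f a) (hf a) (h ▸ hf a')
  have hsurj : Function.Surjective f := by
    intro w
    obtain ⟨a, ha⟩ := hsur w
    exact ⟨a, hGoodInf.func a (f a) w (hf a) ha⟩
  refine ⟨Equiv.ofBijective f ⟨hinj, hsurj⟩, ?_⟩
  intro a b
  constructor
  · intro hab
    obtain ⟨b', h1, h2⟩ := hGoodInf.fwd a (f a) b (hf a) hab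
    have hb' : b' = f b := hGoodInf.func b b' (f b) h1 (hf b)
    show H (f a) (f b)
    exact hb' ▸ h2
  · intro hab
    have hab' : H (f a) (f b) := hab
    obtain ⟨a', h1, h2⟩ := hGoodInf.bwd a (f a) (f b) (hf a) hab'
    have ha' : a' = b := hGoodInf.inj a' b (f b) h1 (hf b)
    exact ha' ▸ h2
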